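/- For any well-ordered class C, the canonical tree on C (all strictly descending finite sequences of elements of C) has no infinite path, and the set it codes is the ordinal of the well-order: the decoding of the node given by a descending sequence ending in c is the ordinal corresponding to c's position, and the root decodes to the order type of C. -/

import Mathlib

universe u

/-- `τ` is a daughter of `σ` in the tree `T`: it extends `σ` by one entry. -/
def Daughter {C : Type u} (T : Set (List C)) (τ σ : List C) : Prop :=
  τ ∈ T ∧ ∃ c : C, τ = σ ++ [c]

/-- Decoding of the nodes of a well-founded tree: a node decodes to the set of
decodings of its daughters. -/
noncomputable def decode {C : Type u} (T : Set (List C))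
    (hwf : WellFounded (Daughter T)) : List C → PSet.{u} :=
  hwf.fix fun σ ih =>
    PSet.mk {c : C // σ ++ [c] ∈ T} fun c => ih (σ ++ [c.1]) ⟨c.2, c.1, rfl⟩

/-- The von Neumann set (as a pre-set) corresponding to an ordinal. -/
noncomputable def vNp : Ordinal.{u} → PSet.{u} :=
  Ordinal.lt_wf.fix (C := fun _ => PSet.{u}) fun o ih =>
    PSet.mk o.ToType fun i =>
      ih (@Ordinal.typein o.ToType (· < ·) isWellOrder_lt i) (Ordinal.typein_lt_self i)

/-- The von Neumann ZF-set corresponding to an ordinal. -/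
noncomputable def vN (o : Ordinal.{u}) : ZFSet.{u} := ZFSet.mk (vNp o)

open Ordinal

/-- Shorthand for the position of an element of `o.toType`. -/
noncomputable def ti (o : Ordinal.{u}) (c : o.ToType) : Ordinal.{u} :=
  @Ordinal.typein o.ToType (· < ·) isWellOrder_lt c

theorem ti_lt_self (o : Ordinal.{u}) (c : o.ToType) : ti o c < o :=
  Ordinal.typein_lt_self c

theorem ti_lt_ti (o : Ordinal.{u}) {c d : o.ToType} : ti o c < ti o d ↔ c < d :=
  @Ordinal.typein_lt_typein o.ToType (· < ·) isWellOrder_lt c d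

/-- Shorthand for enumeration in `o.toType`. -/
noncomputable def en (o : Ordinal.{u}) (b : {b : Ordinal.{u} // b < o}) : o.ToType :=
  @Ordinal.enum o.ToType (· < ·) isWellOrder_lt
    ⟨b.1, by rw [Ordinal.type_toType]; exact b.2⟩

theorem ti_en (o : Ordinal.{u}) (b : {b : Ordinal.{u} // b < o}) : ti o (en o b) = b.1 :=
  @Ordinal.typein_enum o.ToType (· < ·) isWellOrder_lt b.1
    (by rw [Ordinal.type_toType]; exact b.2)

/-- `vNp` unfolded one step. -/
theorem vNp_eq (o : Ordinal.{u}) :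
    vNp o = PSet.mk o.ToType fun i => vNp (ti o i) :=
  Ordinal.lt_wf.fix_eq _ o

theorem decode_eq {C : Type u} (T : Set (List C)) (hwf : WellFounded (Daughter T))
    (σ : List C) :
    decode T hwf σ =
      PSet.mk {c : C // σ ++ [c] ∈ T} fun c => decode T hwf (σ ++ [c.1]) :=
  hwf.fix_eq _ σ

open Ordinal

/-- The "rank" of a node: the position of its last entry, or `o` for the root. -/
noncomputable def rk (o : Ordinal.{u}) (σ : List o.ToType) : Ordinal.{u} :=
  match σ.getLast? with
  | none => o
  | some c => ti o c

theorem rk_nil (o : Ordinal.{u}) : rk o [] = o := by simp [rk]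

theorem rk_concat (o : Ordinal.{u}) (σ : List o.ToType) (c : o.ToType) :
    rk o (σ ++ [c]) = ti o c := by
  simp [rk, List.getLast?_concat]

theorem rk_le (o : Ordinal.{u}) (σ : List o.ToType) : rk o σ ≤ o := by
  unfold rk
  cases σ.getLast? with
  | none => exact le_rfl
  | some c => exact (typein_lt_self c).le

/-- Membership condition for daughters in the canonical tree. -/
theorem mem_tree_iff (o : Ordinal.{u}) {σ : List o.ToType}
    (hσ : σ ∈ {σ : List o.ToType | σ.Chain' (· > ·)}) (c : o.ToType) :
    σ ++ [c] ∈ {σ : List o.ToType | σ.Chain' (· > ·)} ↔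
      ti o c < rk o σ := by
  simp only [Set.mem_setOf_eq, List.Chain', List.isChain_append, List.isChain_singleton, true_and,
    List.head?, Option.mem_def, Option.some.injEq]
  constructor
  · rintro ⟨-, h⟩
    unfold rk
    cases hl : σ.getLast? with
    | none => exact ti_lt_self o c
    | some d =>
      rw [ti_lt_ti]
      exact h d hl c rfl
  · intro h
    refine ⟨hσ, fun d hd e he => ?_⟩
    subst he
    unfold rk at h
    rw [hd, ti_lt_ti] at h
    exact h

/-- Well-foundedness of the daughter relation on the canonical tree. -/
theorem wf_daughter (o : Ordinal.{u}) :
    WellFounded (Daughter {σ : List o.ToType | σ.Chain' (· > ·)}) := by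
  have : Subrelation (Daughter {σ : List o.ToType | σ.Chain' (· > ·)})
      (InvImage (· < ·) fun σ : List o.ToType =>
        (σ.getLast?.elim ⊤ (↑·) : WithTop o.ToType)) := by
    rintro τ σ ⟨hτ, c, rfl⟩
    have hlast : (σ ++ [c]).getLast? = some c := List.getLast?_concat
    simp only [InvImage, hlast, Option.elim]
    cases hl : σ.getLast? with
    | none => exact WithTop.coe_lt_top c
    | some d =>
      simp only [Option.elim]
      rw [WithTop.coe_lt_coe]
      have h := (List.isChain_append.mp hτ).2.2
      exact h d hl c rfl
  exact this.wf (InvImage.wf _ wellFounded_lt)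

/-- `vNp a` as the set of `vNp (typein d)` for `d : o.toType` of rank `< a`. -/
theorem vNp_equiv_mk (o : Ordinal.{u}) {a : Ordinal.{u}} (h : a ≤ o) :
    PSet.Equiv (vNp a)
      (PSet.mk {d : o.ToType // ti o d < a} fun d => vNp (ti o d.1)) := by
  rw [vNp_eq]
  constructor
  · intro i
    have hi : ti a i < a := ti_lt_self a i
    refine ⟨⟨en o ⟨ti a i, hi.trans_le h⟩, by rw [ti_en]; exact hi⟩, ?_⟩
    simp only [ti_en]
    exact PSet.Equiv.refl _
  · rintro ⟨d, hd⟩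
    refine ⟨en a ⟨ti o d, hd⟩, ?_⟩
    simp only [ti_en]
    exact PSet.Equiv.refl _

theorem decode_equiv (o : Ordinal.{u})
    (hwf : WellFounded (Daughter {σ : List o.ToType | σ.Chain' (· > ·)})) :
    ∀ σ : List o.ToType, σ ∈ {σ : List o.ToType | σ.Chain' (· > ·)} →
      PSet.Equiv (decode _ hwf σ) (vNp (rk o σ)) := by
  intro σ
  induction σ using hwf.induction with
  | _ σ ih =>
    intro hσ
    rw [decode_eq]
    refine PSet.Equiv.trans ?_ (vNp_equiv_mk o (rk_le o σ)).symm
    constructor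
    · rintro ⟨c, hc⟩
      refine ⟨⟨c, (mem_tree_iff o hσ c).mp hc⟩, ?_⟩
      have := ih (σ ++ [c]) ⟨hc, c, rfl⟩ hc
      rwa [rk_concat] at this
    · rintro ⟨c, hc⟩
      refine ⟨⟨c, (mem_tree_iff o hσ c).mpr hc⟩, ?_⟩
      have hc' := (mem_tree_iff o hσ c).mpr hc
      have := ih (σ ++ [c]) ⟨hc', c, rfl⟩ hc'
      rwa [rk_concat] at this

/-- The canonical tree on a well order (all strictly descending finite sequences) has no
infinite path, and its root decodes to the von Neumann ordinal of the order type. -/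
theorem canonical_tree_decodes_ordinal (o : Ordinal.{u}) :
    WellFounded (Daughter {σ : List o.ToType | σ.Chain' (· > ·)}) ∧
      ∀ hwf : WellFounded (Daughter {σ : List o.ToType | σ.Chain' (· > ·)}),
        ZFSet.mk (decode _ hwf []) = vN o := by
  refine ⟨wf_daughter o, fun hwf => ?_⟩
  have h := decode_equiv o hwf [] (by simp [List.Chain'])
  rw [rk_nil] at h
  exact ZFSet.sound h
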